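/- If T is a lower bound tree (rn(T) = lb(T)) with unique weight center, n_0 vertices and diameter d_0, then for k ≥ 3, T_{S_k} is also a lower bound tree and rn(T_{S_k}) = k(rn(T) + n_0(d - d_0 - 2) + d_0) + 1, where d = diam(T_{S_k}). -/

import Mathlib

open Finset

namespace RadioNr

variable {V : Type*}

/-- A radio labeling of `G`: for all distinct vertices,
`d(u,v) + |f u - f v| ≥ diam G + 1`. -/
def IsRadioLabeling [Fintype V] (G : SimpleGraph V) (f : V → ℕ) : Prop :=
  ∀ u v : V, u ≠ v →
    (G.diam : ℤ) + 1 ≤ (G.dist u v : ℤ) + |(f u : ℤ) - (f v : ℤ)|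

/-- The span of a labeling: the maximum label used. -/
def span [Fintype V] (f : V → ℕ) : ℕ := Finset.univ.sup f

/-- The radio number: minimum span over all radio labelings. -/
noncomputable def radioNumber [Fintype V] (G : SimpleGraph V) : ℕ :=
  sInf {k | ∃ f : V → ℕ, IsRadioLabeling G f ∧ span f = k}

/-- The weight of `G` at `v`: sum of distances to all vertices. -/
noncomputable def wt [Fintype V] (G : SimpleGraph V) (v : V) : ℕ := ∑ u : V, G.dist u v

/-- A weight center minimizes the weight. -/
def IsWeightCenter [Fintype V] (G : SimpleGraph V) (v : V) : Prop :=
  ∀ x : V, wt G v ≤ wt G x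

/-- The weight of `G`: the minimum total distance. -/
noncomputable def minWt [Fintype V] (G : SimpleGraph V) : ℕ :=
  sInf (Set.range (wt G))

/-- The level of `u`: distance to the nearest weight center. -/
noncomputable def level [Fintype V] (G : SimpleGraph V) (u : V) : ℕ :=
  sInf {n | ∃ x, IsWeightCenter G x ∧ G.dist u x = n}

/-- The total level of `G`. -/
noncomputable def totalLevel [Fintype V] (G : SimpleGraph V) : ℕ :=
  ∑ u : V, level G u

end RadioNr

open RadioNr

section Aux

variable {A B : Type*}

/-- Mapping a walk through a map that sends edges to edges-or-equal. -/
lemma dist_le_length_of_pseudoHom {G : SimpleGraph A} {H : SimpleGraph B}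
    (hconn : H.Connected) (F : A → B)
    (hF : ∀ u v, G.Adj u v → H.Adj (F u) (F v) ∨ F u = F v)
    {a b : A} (p : G.Walk a b) : H.dist (F a) (F b) ≤ p.length := by
  induction p with
  | nil => simp
  | @cons u v c hadj q ih =>
    have h1 : H.dist (F u) (F v) ≤ 1 := by
      rcases hF u v hadj with h | h
      · exact le_of_eq (SimpleGraph.dist_eq_one_iff_adj.mpr h)
      · simp [h, SimpleGraph.dist_self]
    calc H.dist (F u) (F c) ≤ H.dist (F u) (F v) + H.dist (F v) (F c) :=
          hconn.dist_triangle
      _ ≤ 1 + q.length := by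
          have := ih
          omega
      _ = (SimpleGraph.Walk.cons hadj q).length := by simp [SimpleGraph.Walk.length_cons]; omega

lemma abs_potential_le_length {G : SimpleGraph A} (η : A → ℤ)
    (hη : ∀ u v, G.Adj u v → |η u - η v| ≤ 1)
    {a b : A} (p : G.Walk a b) : |η a - η b| ≤ p.length := by
  induction p with
  | nil => simp
  | @cons u v c hadj q ih =>
    have h1 := hη u v hadj
    have : |η u - η c| ≤ |η u - η v| + |η v - η c| := by
      have := abs_sub_le (η u) (η v) (η c); linarith [abs_sub_le (η u) (η v) (η c)]
    simp only [SimpleGraph.Walk.length_cons]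
    push_cast
    omega

lemma abs_potential_le_dist {G : SimpleGraph A} (hconn : G.Connected) (η : A → ℤ)
    (hη : ∀ u v, G.Adj u v → |η u - η v| ≤ 1) (a b : A) :
    |η a - η b| ≤ G.dist a b := by
  obtain ⟨p, hp⟩ := (hconn a b).exists_walk_length_eq_dist
  simpa [hp] using abs_potential_le_length η hη p

lemma dist_le_dist_of_pseudoHom {G : SimpleGraph A} {H : SimpleGraph B}
    (hconn : G.Connected) (hconn' : H.Connected) (F : A → B)
    (hF : ∀ u v, G.Adj u v → H.Adj (F u) (F v) ∨ F u = F v) (a b : A) :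
    H.dist (F a) (F b) ≤ G.dist a b := by
  obtain ⟨p, hp⟩ := (hconn a b).exists_walk_length_eq_dist
  simpa [hp] using dist_le_length_of_pseudoHom hconn' F hF p

/-- sort an injective ℕ-valued function into a strictly monotone enumeration -/
lemma exists_strictMono_equiv [Fintype A] {N : ℕ} (hN : Fintype.card A = N)
    (f : A → ℕ) (hf : Function.Injective f) :
    ∃ σ : Fin N ≃ A, StrictMono (fun i => f (σ i)) := by
  classical
  have hcard : (Finset.univ.image f).card = N := by
    rw [Finset.card_image_of_injective _ hf, Finset.card_univ, hN]
  set iso := (Finset.univ.image f).orderIsoOfFin hcard with hiso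
  have hmem : ∀ i : Fin N, ((iso i : ℕ) ∈ Finset.univ.image f) := fun i => (iso i).2
  choose g hg using fun i => Finset.mem_image.mp (hmem i)
  obtain ⟨hgu, hgf⟩ := forall_and.mp fun i => hg i
  have hginj : Function.Injective g := by
    intro i j hij
    apply iso.injective
    apply Subtype.ext
    rw [← hgf i, ← hgf j, hij]
  have hgsurj : Function.Surjective g := by
    intro a
    have : f a ∈ Finset.univ.image f := Finset.mem_image_of_mem f (Finset.mem_univ a)
    obtain ⟨i, hi⟩ := iso.surjective ⟨f a, this⟩
    exact ⟨i, hf (by rw [hgf i, hi])⟩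
  refine ⟨Equiv.ofBijective g ⟨hginj, hgsurj⟩, ?_⟩
  intro i j hij
  show f (g i) < f (g j)
  rw [hgf i, hgf j]
  exact Subtype.coe_lt_coe.mpr (iso.strictMono hij)

end Aux

section Aux2

variable {A : Type*} [Fintype A]

lemma ediam_ne_top_of_connected {G : SimpleGraph A} (hconn : G.Connected) : G.ediam ≠ ⊤ := by
  have : Nonempty A := hconn.nonempty
  obtain ⟨u, v, h⟩ := G.exists_edist_eq_ediam_of_finite
  rw [← h]
  exact SimpleGraph.edist_ne_top_iff_reachable.mpr (hconn u v)

lemma exists_isRadioLabeling (G : SimpleGraph A) : ∃ f, IsRadioLabeling G f := by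
  classical
  refine ⟨fun v => (Fintype.equivFin A v) * (G.diam + 1), ?_⟩
  intro u v huv
  have hne : ((Fintype.equivFin A u : ℕ) : ℤ) ≠ ((Fintype.equivFin A v : ℕ) : ℤ) := by
    simp only [ne_eq, Nat.cast_inj]
    intro h
    exact huv ((Fintype.equivFin A).injective (Fin.ext h))
  set a := ((Fintype.equivFin A u : ℕ) : ℤ)
  set b := ((Fintype.equivFin A v : ℕ) : ℤ)
  have h1 : (1 : ℤ) ≤ |a - b| := Int.one_le_abs (sub_ne_zero.mpr hne)
  have h2 : |(((Fintype.equivFin A u : ℕ) * (G.diam + 1) : ℕ) : ℤ) -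
      (((Fintype.equivFin A v : ℕ) * (G.diam + 1) : ℕ) : ℤ)| = |a - b| * ((G.diam : ℤ) + 1) := by
    push_cast
    rw [← sub_mul, abs_mul, abs_of_nonneg (show (0:ℤ) ≤ (G.diam:ℤ)+1 by positivity)]
  have h3 : (0 : ℤ) ≤ G.dist u v := by positivity
  have h4 : |a - b| * ((G.diam : ℤ) + 1) ≥ 1 * ((G.diam : ℤ) + 1) :=
    mul_le_mul_of_nonneg_right h1 (by positivity)
  simp only [h2]
  linarith

lemma radio_injective {G : SimpleGraph A} (hconn : G.Connected) (hd : 1 ≤ G.diam)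
    {f : A → ℕ} (hf : IsRadioLabeling G f) : Function.Injective f := by
  intro u v h
  by_contra hne
  have h1 := hf u v hne
  have h2 : G.dist u v ≤ G.diam :=
    SimpleGraph.dist_le_diam (ediam_ne_top_of_connected hconn)
  rw [h] at h1
  simp only [sub_self, abs_zero, add_zero] at h1
  have : (G.dist u v : ℤ) ≤ (G.diam : ℤ) := by exact_mod_cast h2
  linarith

lemma span_lower_bound (G : SimpleGraph A) (hconn : G.Connected) (c : A)
    (hlev : ∀ u, level G u = G.dist u c) (hN : 2 ≤ Fintype.card A) (hd : 1 ≤ G.diam)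
    (f : A → ℕ) (hf : IsRadioLabeling G f) :
    ((Fintype.card A : ℤ) - 1) * ((G.diam : ℤ) + 1) - 2 * (totalLevel G : ℤ) + 1 ≤ span f := by
  classical
  have hN0 : 0 < Fintype.card A := by omega
  set N := Fintype.card A with hNdef
  obtain ⟨σ, hσ⟩ := exists_strictMono_equiv hNdef.symm f (radio_injective hconn hd hf)
  set a : ℕ → A := fun t => σ ⟨t % N, Nat.mod_lt _ hN0⟩ with ha
  have haeq : ∀ t, ∀ (ht : t < N), a t = σ ⟨t, ht⟩ := by
    intro t ht
    simp only [ha]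
    congr 1
    exact Fin.ext (Nat.mod_eq_of_lt ht)
  set lev : ℕ → ℤ := fun t => (G.dist (a t) c : ℤ) with hlevdef
  set F : ℕ → ℤ := fun t => (f (a t) : ℤ) with hF
  have hlev_eq : ∀ t, lev t = (G.dist (a t) c : ℤ) := fun _ => rfl
  have hF_eq : ∀ t, F t = (f (a t) : ℤ) := fun _ => rfl
  have hlev_nonneg : ∀ t, (0:ℤ) ≤ lev t := fun t => by rw [hlev_eq]; positivity
  have hstep : ∀ t, t + 1 < N →
      ((G.diam : ℤ) + 1) - lev t - lev (t + 1) ≤ F (t + 1) - F t := by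
    intro t ht
    have h1 : a t = σ ⟨t, by omega⟩ := haeq t (by omega)
    have h2 : a (t+1) = σ ⟨t+1, ht⟩ := haeq (t+1) ht
    have hmono : f (a t) < f (a (t+1)) := by
      rw [h1, h2]; exact hσ (by simp [Fin.lt_def])
    have hne : a t ≠ a (t+1) := fun h => by simp [h] at hmono
    have hr := hf (a t) (a (t+1)) hne
    have hlt : (f (a t) : ℤ) < (f (a (t+1)) : ℤ) := by exact_mod_cast hmono
    have habs : |(f (a t) : ℤ) - (f (a (t+1)) : ℤ)| = F (t+1) - F t := by
      rw [abs_sub_comm, abs_of_pos (by linarith), hF_eq, hF_eq]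
    rw [habs] at hr
    have htri : G.dist (a t) (a (t+1)) ≤ G.dist (a t) c + G.dist (a (t+1)) c := by
      calc G.dist (a t) (a (t+1)) ≤ G.dist (a t) c + G.dist c (a (t+1)) := hconn.dist_triangle
        _ = G.dist (a t) c + G.dist (a (t+1)) c := by
            rw [show G.dist c (a (t+1)) = G.dist (a (t+1)) c from SimpleGraph.dist_comm]
    have h5 : (G.dist (a t) (a (t+1)) : ℤ) ≤ lev t + lev (t+1) := by
      rw [hlev_eq, hlev_eq]; exact_mod_cast htri
    linarith
  have htel : ∑ t ∈ Finset.range (N - 1), (F (t + 1) - F t) = F (N - 1) - F 0 :=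
    Finset.sum_range_sub F (N - 1)
  have hsum1 : ∑ t ∈ Finset.range (N - 1), (((G.diam : ℤ) + 1) - lev t - lev (t + 1))
      ≤ F (N - 1) - F 0 := by
    rw [← htel]
    apply Finset.sum_le_sum
    intro t htmem
    exact hstep t (by have := Finset.mem_range.mp htmem; omega)
  have hlevsum : ∑ t ∈ Finset.range N, lev t = (totalLevel G : ℤ) := by
    rw [Finset.sum_range (fun t => lev t)]
    have heq : ∀ i : Fin N, lev i = ((G.dist (σ i) c : ℕ) : ℤ) := by
      intro i; rw [hlev_eq, haeq i i.2]
    rw [Finset.sum_congr rfl (fun i _ => heq i), ← Nat.cast_sum,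
      Equiv.sum_comp σ (fun v => G.dist v c)]
    unfold totalLevel
    norm_cast
    exact (Finset.sum_congr rfl (fun v _ => (hlev v).symm))
  have hsplit1 : ∑ t ∈ Finset.range N, lev t
      = ∑ t ∈ Finset.range (N - 1), lev t + lev (N - 1) := by
    conv_lhs => rw [show N = (N - 1) + 1 by omega]
    exact Finset.sum_range_succ lev (N - 1)
  have hsplit2 : ∑ t ∈ Finset.range N, lev t
      = ∑ t ∈ Finset.range (N - 1), lev (t + 1) + lev 0 := by
    conv_lhs => rw [show N = (N - 1) + 1 by omega]
    exact Finset.sum_range_succ' lev (N - 1)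
  have hsumexp : ∑ t ∈ Finset.range (N - 1), (((G.diam : ℤ) + 1) - lev t - lev (t + 1))
      = ((N : ℤ) - 1) * ((G.diam : ℤ) + 1)
        - (∑ t ∈ Finset.range (N - 1), lev t)
        - (∑ t ∈ Finset.range (N - 1), lev (t + 1)) := by
    rw [Finset.sum_sub_distrib, Finset.sum_sub_distrib, Finset.sum_const, Finset.card_range]
    push_cast [show ((N : ℤ) - 1) = ((N - 1 : ℕ) : ℤ) by omega]
    ring
  have hends : (1 : ℤ) ≤ lev 0 + lev (N - 1) := by
    by_contra hcon
    push_neg at hcon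
    have l0 : (0:ℤ) ≤ lev 0 := hlev_nonneg 0
    have l1 : (0:ℤ) ≤ lev (N-1) := hlev_nonneg (N-1)
    have e0 : (G.dist (a 0) c : ℤ) = 0 := by rw [← hlev_eq]; omega
    have e1 : (G.dist (a (N-1)) c : ℤ) = 0 := by rw [← hlev_eq]; omega
    have hc0 : a 0 = c := (hconn.dist_eq_zero_iff).mp (by exact_mod_cast e0)
    have hc1 : a (N-1) = c := (hconn.dist_eq_zero_iff).mp (by exact_mod_cast e1)
    have hne01 : a 0 ≠ a (N - 1) := by
      rw [haeq 0 (by omega), haeq (N-1) (by omega)]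
      intro h
      have := σ.injective h
      simp only [Fin.mk.injEq] at this
      omega
    exact hne01 (hc0.trans hc1.symm)
  have hspan : (f (a (N - 1)) : ℤ) ≤ (span f : ℤ) :=
    Nat.cast_le.mpr (Finset.le_sup (Finset.mem_univ (a (N-1))))
  have hF0 : (0 : ℤ) ≤ F 0 := by rw [hF_eq]; positivity
  have hFlast : F (N - 1) = (f (a (N-1)) : ℤ) := rfl
  rw [hsumexp] at hsum1
  have h1 : ∑ t ∈ Finset.range (N - 1), lev t = (totalLevel G : ℤ) - lev (N-1) := by
    omega
  have h2 : ∑ t ∈ Finset.range (N - 1), lev (t+1) = (totalLevel G : ℤ) - lev 0 := by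
    omega
  rw [h1, h2] at hsum1
  have hfin : ((N : ℤ) - 1) * ((G.diam : ℤ) + 1) - 2 * (totalLevel G : ℤ) + 1 ≤ F (N - 1) := by
    linarith
  rw [hFlast] at hfin
  rw [hNdef] at hfin
  linarith

end Aux2

set_option maxHeartbeats 4000000 in
/-- if `T` is a lower bound tree with unique weight center (so
`rn(T) = (n₀-1)(d₀+1) - 2L(T) + 1`), then for `k ≥ 3` the glued tree `T_{S_k}` is
a lower bound tree (with unique weight center `w`, so `ε = 1`) and
`rn(T_{S_k}) = k(rn(T) + n₀(d - d₀ - 2) + d₀) + 1` where `d = diam(T_{S_k})`. -/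
theorem glued_star_lower_bound_tree {V : Type*} [Fintype V] (T : SimpleGraph V)
    (hT : T.IsTree) (hd₀ : 2 ≤ T.diam) (w₀ : V)
    (hw₀ : IsWeightCenter T w₀) (hw₀uniq : ∀ v : V, IsWeightCenter T v → v = w₀)
    (hlb : (radioNumber T : ℤ) =
      ((Fintype.card V : ℤ) - 1) * ((T.diam : ℤ) + 1) - 2 * (totalLevel T : ℤ) + 1)
    {k : ℕ} (hk : 3 ≤ k)
    {V' : Type*} [Fintype V'] (T' : SimpleGraph V') (hT' : T'.IsTree)
    (φ : Fin k → V → V') (w : V')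
    (hinj : ∀ i, Function.Injective (φ i))
    (hdisj : ∀ i j, i ≠ j → ∀ (x y : V), φ i x ≠ φ j y)
    (hwni : ∀ i x, φ i x ≠ w)
    (hcover : ∀ v' : V', v' = w ∨ ∃ i x, φ i x = v')
    (hadj : ∀ i (x y : V), T'.Adj (φ i x) (φ i y) ↔ T.Adj x y)
    (hadjw : ∀ i x, T'.Adj w (φ i x) ↔ x = w₀)
    (hcross : ∀ i j, i ≠ j → ∀ (x y : V), ¬ T'.Adj (φ i x) (φ j y)) :
    (radioNumber T' : ℤ) =
      ((Fintype.card V' : ℤ) - 1) * ((T'.diam : ℤ) + 1) - 2 * (totalLevel T' : ℤ) + 1 ∧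
    (radioNumber T' : ℤ) =
      (k : ℤ) * ((radioNumber T : ℤ) +
        (Fintype.card V : ℤ) * ((T'.diam : ℤ) - (T.diam : ℤ) - 2) + (T.diam : ℤ)) + 1 := by
  classical
  have hTc : T.Connected := hT.isConnected
  have hT'c : T'.Connected := hT'.isConnected
  set ℓ : V → ℕ := fun x => T.dist x w₀ with hℓdef
  have hℓ_eq : ∀ x, ℓ x = T.dist x w₀ := fun _ => rfl
  have hℓw₀ : ℓ w₀ = 0 := by rw [hℓ_eq]; exact SimpleGraph.dist_self
  -- edge classification
  have hedge : ∀ u v' : V', T'.Adj u v' →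
      (∃ i x y, u = φ i x ∧ v' = φ i y ∧ T.Adj x y) ∨
      (∃ i, u = w ∧ v' = φ i w₀) ∨ (∃ i, u = φ i w₀ ∧ v' = w) := by
    intro u v' hA
    rcases hcover u with hu | ⟨i, x, hx⟩
    · rcases hcover v' with hv | ⟨j, y, hy⟩
      · exfalso; rw [hu, hv] at hA; exact T'.irrefl hA
      · subst hu; rw [← hy] at hA ⊢
        have : y = w₀ := (hadjw j y).mp hA
        exact Or.inr (Or.inl ⟨j, rfl, by rw [this]⟩)
    · rcases hcover v' with hv | ⟨j, y, hy⟩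
      · subst hv; rw [← hx] at hA ⊢
        have : x = w₀ := (hadjw i x).mp hA.symm
        exact Or.inr (Or.inr ⟨i, by rw [this], rfl⟩)
      · rw [← hx, ← hy] at hA ⊢
        by_cases hij : i = j
        · subst hij
          exact Or.inl ⟨i, x, y, rfl, rfl, (hadj i x y).mp hA⟩
        · exact absurd hA (hcross i j hij x y)
  have hwalkmap : ∀ (i : Fin k) (x y : V), T'.dist (φ i x) (φ i y) ≤ T.dist x y := by
    intro i x y
    obtain ⟨p, hp⟩ := (hTc x y).exists_walk_length_eq_dist
    let hhom : T →g T' := ⟨φ i, fun h => (hadj i _ _).mpr h⟩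
    calc T'.dist (φ i x) (φ i y) ≤ (p.map hhom).length := SimpleGraph.dist_le _
      _ = T.dist x y := by rw [SimpleGraph.Walk.length_map, hp]
  -- dist within the same copy
  have hdsame : ∀ (i : Fin k) (x y : V), T'.dist (φ i x) (φ i y) = T.dist x y := by
    intro i x y
    refine le_antisymm (hwalkmap i x y) ?_
    set ψ : V' → V := fun v => if h : ∃ z, φ i z = v then h.choose else w₀ with hψdef
    have hψφ : ∀ z, ψ (φ i z) = z := by
      intro z
      have hex : ∃ z', φ i z' = φ i z := ⟨z, rfl⟩
      simp only [hψdef, dif_pos hex]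
      exact hinj i hex.choose_spec
    have hψφ' : ∀ (j : Fin k) (z : V), j ≠ i → ψ (φ j z) = w₀ := by
      intro j z hj
      have hnex : ¬ ∃ z', φ i z' = φ j z := by
        rintro ⟨z', hz'⟩
        exact hdisj i j (Ne.symm hj) z' z hz'
      simp only [hψdef, dif_neg hnex]
    have hψw : ψ w = w₀ := by
      have hnex : ¬ ∃ z', φ i z' = w := by rintro ⟨z', hz'⟩; exact hwni i z' hz'
      simp only [hψdef, dif_neg hnex]
    have hpseudo : ∀ u v, T'.Adj u v → T.Adj (ψ u) (ψ v) ∨ ψ u = ψ v := by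
      intro u v hA
      rcases hedge u v hA with ⟨j, a, b, hu, hv, hab⟩ | ⟨j, hu, hv⟩ | ⟨j, hu, hv⟩
      · subst hu; subst hv
        by_cases hj : j = i
        · subst hj; rw [hψφ, hψφ]; exact Or.inl hab
        · rw [hψφ' j a hj, hψφ' j b hj]; exact Or.inr rfl
      · subst hu; subst hv
        by_cases hj : j = i
        · subst hj; rw [hψw, hψφ]; exact Or.inr rfl
        · rw [hψw, hψφ' j _ hj]; exact Or.inr rfl
      · subst hu; subst hv
        by_cases hj : j = i
        · subst hj; rw [hψw, hψφ]; exact Or.inr rfl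
        · rw [hψw, hψφ' j _ hj]; exact Or.inr rfl
    have := dist_le_dist_of_pseudoHom hT'c hTc ψ hpseudo (φ i x) (φ i y)
    rwa [hψφ, hψφ] at this
  -- ℓ is 1-Lipschitz on edges of T
  have hlip : ∀ x y : V, T.Adj x y → (ℓ x : ℤ) ≤ (ℓ y : ℤ) + 1 := by
    intro x y hxy
    have h1 : T.dist x w₀ ≤ T.dist x y + T.dist y w₀ := hTc.dist_triangle
    have h2 : T.dist x y = 1 := SimpleGraph.dist_eq_one_iff_adj.mpr hxy
    rw [hℓ_eq, hℓ_eq]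
    exact_mod_cast by omega
  -- potentials
  have hpot : ∀ i : Fin k, ∃ A : V' → ℤ, A w = 0 ∧ (∀ x, A (φ i x) = (ℓ x : ℤ) + 1)
      ∧ (∀ (j : Fin k) (x : V), j ≠ i → A (φ j x) = 0) := by
    intro i
    refine ⟨fun v => if h : ∃ z, φ i z = v then ((ℓ h.choose : ℤ) + 1) else 0, ?_, ?_, ?_⟩
    · have hnex : ¬ ∃ z', φ i z' = w := by rintro ⟨z', hz'⟩; exact hwni i z' hz'
      simp only [dif_neg hnex]
    · intro x
      have hex : ∃ z, φ i z = φ i x := ⟨x, rfl⟩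
      simp only [dif_pos hex]
      rw [hinj i hex.choose_spec]
    · intro j x hj
      have hnex : ¬ ∃ z', φ i z' = φ j x := by
        rintro ⟨z', hz'⟩
        exact hdisj i j (Ne.symm hj) z' x hz'
      simp only [dif_neg hnex]
  -- dist from w
  have hdw : ∀ (i : Fin k) (x : V), T'.dist w (φ i x) = ℓ x + 1 := by
    intro i x
    obtain ⟨A, hAw, hAi, hAj⟩ := hpot i
    have hAlip : ∀ u v, T'.Adj u v → |A u - A v| ≤ 1 := by
      intro u v hA
      rcases hedge u v hA with ⟨j, a, b, hu, hv, hab⟩ | ⟨j, hu, hv⟩ | ⟨j, hu, hv⟩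
      · subst hu; subst hv
        by_cases hj : j = i
        · subst hj; rw [hAi, hAi]
          have l1 := hlip a b hab
          have l2 := hlip b a hab.symm
          rw [abs_le]; constructor <;> linarith
        · rw [hAj j a hj, hAj j b hj]; simp
      · subst hu; subst hv
        by_cases hj : j = i
        · subst hj; rw [hAw, hAi, hℓw₀]; simp
        · rw [hAw, hAj j _ hj]; simp
      · subst hu; subst hv
        by_cases hj : j = i
        · subst hj; rw [hAw, hAi, hℓw₀]; simp
        · rw [hAw, hAj j _ hj]; simp
    have hge : ((ℓ x : ℤ) + 1) ≤ T'.dist w (φ i x) := by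
      have := abs_potential_le_dist hT'c A hAlip w (φ i x)
      rw [hAw, hAi] at this
      calc ((ℓ x : ℤ) + 1) = |(0 : ℤ) - ((ℓ x : ℤ) + 1)| := by
            rw [zero_sub, abs_neg, abs_of_nonneg (by positivity)]
        _ ≤ T'.dist w (φ i x) := this
    have hle : T'.dist w (φ i x) ≤ ℓ x + 1 := by
      obtain ⟨p, hp⟩ := (hTc w₀ x).exists_walk_length_eq_dist
      let hhom : T →g T' := ⟨φ i, fun h => (hadj i _ _).mpr h⟩
      have hadj1 : T'.Adj w (φ i w₀) := (hadjw i w₀).mpr rfl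
      calc T'.dist w (φ i x) ≤ (SimpleGraph.Walk.cons hadj1 (p.map hhom)).length :=
            SimpleGraph.dist_le _
        _ = ℓ x + 1 := by
            rw [SimpleGraph.Walk.length_cons, SimpleGraph.Walk.length_map, hp]
            rw [hℓ_eq, SimpleGraph.dist_comm]
    have hge' : ℓ x + 1 ≤ T'.dist w (φ i x) := by exact_mod_cast hge
    omega
  -- cross distance
  have hdcross : ∀ (i j : Fin k), i ≠ j → ∀ x y, T'.dist (φ i x) (φ j y) = ℓ x + ℓ y + 2 := by
    intro i j hij x y
    obtain ⟨A, hAw, hAi, hAj⟩ := hpot i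
    obtain ⟨B, hBw, hBi, hBj⟩ := hpot j
    set η : V' → ℤ := fun v => A v - B v with hηdef
    have hη_eq : ∀ v, η v = A v - B v := fun _ => rfl
    have hηi : ∀ a, η (φ i a) = (ℓ a : ℤ) + 1 := by
      intro a; rw [hη_eq, hAi, hBj i a hij]; ring
    have hηj : ∀ a, η (φ j a) = -((ℓ a : ℤ) + 1) := by
      intro a; rw [hη_eq, hBi, hAj j a (Ne.symm hij)]; ring
    have hηo : ∀ (c : Fin k) (a : V), c ≠ i → c ≠ j → η (φ c a) = 0 := by
      intro c a hci hcj; rw [hη_eq, hAj c a hci, hBj c a hcj]; ring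
    have hηw : η w = 0 := by rw [hη_eq, hAw, hBw]; ring
    have hηlip : ∀ u v, T'.Adj u v → |η u - η v| ≤ 1 := by
      intro u v hA'
      have hcase : ∀ (c : Fin k), |η w - η (φ c w₀)| ≤ 1 := by
        intro c
        by_cases hci : c = i
        · subst hci; rw [hηw, hηi, hℓw₀]; norm_num
        by_cases hcj : c = j
        · subst hcj; rw [hηw, hηj, hℓw₀]; norm_num
        · rw [hηw, hηo c w₀ hci hcj]; norm_num
      rcases hedge u v hA' with ⟨c, a, b, hu, hv, hab⟩ | ⟨c, hu, hv⟩ | ⟨c, hu, hv⟩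
      · subst hu; subst hv
        have l1 := hlip a b hab
        have l2 := hlip b a hab.symm
        by_cases hci : c = i
        · subst hci; rw [hηi, hηi]; rw [abs_le]; constructor <;> linarith
        by_cases hcj : c = j
        · subst hcj; rw [hηj, hηj]; rw [abs_le]; constructor <;> linarith
        · rw [hηo c a hci hcj, hηo c b hci hcj]; norm_num
      · subst hu; subst hv; exact hcase c
      · subst hu; subst hv; rw [abs_sub_comm]; exact hcase c
    have hge : ((ℓ x : ℤ) + (ℓ y : ℤ) + 2) ≤ T'.dist (φ i x) (φ j y) := by
      have := abs_potential_le_dist hT'c η hηlip (φ i x) (φ j y)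
      rw [hηi, hηj] at this
      have hof : ((ℓ x : ℤ) + 1) - (-((ℓ y : ℤ) + 1)) = (ℓ x : ℤ) + (ℓ y : ℤ) + 2 := by ring
      calc ((ℓ x : ℤ) + (ℓ y : ℤ) + 2) = |((ℓ x : ℤ) + 1) - (-((ℓ y : ℤ) + 1))| := by
            rw [hof, abs_of_nonneg (by positivity)]
        _ ≤ T'.dist (φ i x) (φ j y) := this
    have hle : T'.dist (φ i x) (φ j y) ≤ ℓ x + ℓ y + 2 := by
      calc T'.dist (φ i x) (φ j y)
          ≤ T'.dist (φ i x) w + T'.dist w (φ j y) := hT'c.dist_triangle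
        _ ≤ ℓ x + ℓ y + 2 := by
            rw [show T'.dist (φ i x) w = T'.dist w (φ i x) from SimpleGraph.dist_comm, hdw, hdw]
            omega
    have hge' : ℓ x + ℓ y + 2 ≤ T'.dist (φ i x) (φ j y) := by exact_mod_cast hge
    omega
  have hdw' : ∀ (i : Fin k) (x : V), T'.dist (φ i x) w = ℓ x + 1 := by
    intro i x
    rw [show T'.dist (φ i x) w = T'.dist w (φ i x) from SimpleGraph.dist_comm, hdw]
  -- decomposition equiv and cardinality
  set E : (Fin k × V) ⊕ Unit → V' := Sum.elim (fun q => φ q.1 q.2) (fun _ => w) with hE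
  have hEbij : Function.Bijective E := by
    constructor
    · rintro (⟨i,x⟩|⟨⟩) (⟨j,y⟩|⟨⟩) h
      · simp only [hE, Sum.elim_inl] at h
        by_cases hij : i = j
        · subst hij; rw [hinj i h]
        · exact absurd h (hdisj i j hij x y)
      · exact absurd h (hwni _ _)
      · exact absurd h.symm (hwni _ _)
      · rfl
    · intro v'
      rcases hcover v' with hv | ⟨i, x, hx⟩
      · exact ⟨Sum.inr (), hv.symm⟩
      · exact ⟨Sum.inl (i, x), hx⟩
  have hcard' : Fintype.card V' = k * Fintype.card V + 1 := by
    rw [← Fintype.card_congr (Equiv.ofBijective E hEbij)]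
    simp [Fintype.card_prod]
  have hsumdec : ∀ F : V' → ℕ, ∑ v', F v' = F w + ∑ i : Fin k, ∑ x : V, F (φ i x) := by
    intro F
    rw [← Equiv.sum_comp (Equiv.ofBijective E hEbij) F, Fintype.sum_sum_type]
    simp only [Equiv.ofBijective_apply, hE, Sum.elim_inl, Sum.elim_inr]
    rw [Fintype.sum_prod_type]
    simp [add_comm]
  -- eccentricity
  haveI : Nonempty V := ⟨w₀⟩
  haveI : Nonempty V' := ⟨w⟩
  set e : ℕ := Finset.univ.sup ℓ with hedef
  have he_le : ∀ x, ℓ x ≤ e := fun x => Finset.le_sup (Finset.mem_univ x)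
  obtain ⟨xm, _, hxm⟩ := Finset.exists_mem_eq_sup Finset.univ ⟨w₀, Finset.mem_univ w₀⟩ ℓ
  have hn1 : 1 ≤ Fintype.card V := Fintype.card_pos_iff.mpr ⟨w₀⟩
  have hd₀2e : T.diam ≤ 2 * e := by
    obtain ⟨u, v, huv⟩ := T.exists_dist_eq_diam
    have h1 : T.dist u v ≤ T.dist u w₀ + T.dist w₀ v := hTc.dist_triangle
    have h2 : T.dist w₀ v = ℓ v := by rw [hℓ_eq, SimpleGraph.dist_comm]
    have := he_le u
    have := he_le v
    rw [hℓ_eq] at *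
    omega
  have he1 : 1 ≤ e := by omega
  have hn2 : 2 ≤ Fintype.card V := by
    obtain ⟨u, v, huv⟩ := T.exists_dist_eq_diam
    have hne : u ≠ v := by
      intro h; subst h; rw [SimpleGraph.dist_self] at huv; omega
    exact Fintype.one_lt_card_iff.mpr ⟨u, v, hne⟩
  -- levels in T'
  have hlev'le : ∀ v' : V', T'.dist v' w ≤ e + 1 := by
    intro v'
    rcases hcover v' with hv | ⟨i, x, hx⟩
    · subst hv; rw [SimpleGraph.dist_self]; omega
    · rw [← hx, hdw']; have := he_le x; omega
  -- diameter of T'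
  have hdiam' : T'.diam = 2 * e + 2 := by
    have hub : T'.diam ≤ 2 * e + 2 := by
      obtain ⟨u, v, huv⟩ := T'.exists_dist_eq_diam (α := V')
      have h1 : T'.dist u v ≤ T'.dist u w + T'.dist w v := hT'c.dist_triangle
      have h2 : T'.dist w v = T'.dist v w := SimpleGraph.dist_comm
      have := hlev'le u
      have := hlev'le v
      omega
    have hlb2 : 2 * e + 2 ≤ T'.diam := by
      have hne01 : (⟨0, by omega⟩ : Fin k) ≠ ⟨1, by omega⟩ :=
        Fin.ne_of_val_ne (by norm_num)
      have hd := hdcross ⟨0, by omega⟩ ⟨1, by omega⟩ hne01 xm xm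
      have := SimpleGraph.dist_le_diam (ediam_ne_top_of_connected hT'c)
        (u := φ ⟨0, by omega⟩ xm) (v := φ ⟨1, by omega⟩ xm)
      rw [hd] at this
      omega
    omega
  -- weight computations
  set LT : ℕ := ∑ x : V, ℓ x with hLT
  have hwtT : wt T w₀ = LT := by
    unfold wt
    exact Finset.sum_congr rfl (fun x _ => (hℓ_eq x).symm)
  have hsumdistw : ∑ v' : V', T'.dist v' w = k * (LT + Fintype.card V) := by
    rw [hsumdec (fun v' => T'.dist v' w)]
    rw [SimpleGraph.dist_self]
    have : ∀ i : Fin k, ∑ x : V, T'.dist (φ i x) w = LT + Fintype.card V := by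
      intro i
      rw [show (∑ x : V, T'.dist (φ i x) w) = ∑ x : V, (ℓ x + 1) from
        Finset.sum_congr rfl (fun x _ => hdw' i x)]
      rw [Finset.sum_add_distrib, Finset.sum_const, Finset.card_univ, smul_eq_mul, mul_one]
    rw [Finset.sum_congr rfl (fun i _ => this i), Finset.sum_const, Finset.card_univ,
      Fintype.card_fin, smul_eq_mul]
    omega
  have hwt'w : wt T' w = k * (LT + Fintype.card V) := hsumdistw
  have hwt'φ : ∀ (i : Fin k) (z : V), wt T' (φ i z)
      = wt T z + (k-1) * (LT + Fintype.card V * (ℓ z + 2)) + (ℓ z + 1) := by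
    intro i z
    unfold wt
    rw [hsumdec (fun v' => T'.dist v' (φ i z))]
    rw [show T'.dist w (φ i z) = ℓ z + 1 from hdw i z]
    rw [← Finset.sum_erase_add Finset.univ _ (Finset.mem_univ i)]
    have hinner_i : ∑ x : V, T'.dist (φ i x) (φ i z) = ∑ u : V, T.dist u z :=
      Finset.sum_congr rfl (fun x _ => hdsame i x z)
    have hinner_j : ∀ j : Fin k, j ≠ i →
        ∑ x : V, T'.dist (φ j x) (φ i z) = LT + Fintype.card V * (ℓ z + 2) := by
      intro j hj
      rw [Finset.sum_congr rfl (fun x _ => hdcross j i hj x z)]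
      rw [show (∑ x : V, (ℓ x + ℓ z + 2)) = ∑ x : V, (ℓ x + (ℓ z + 2)) from
        Finset.sum_congr rfl (fun x _ => by omega)]
      rw [Finset.sum_add_distrib, Finset.sum_const, Finset.card_univ, smul_eq_mul]
    rw [Finset.sum_congr rfl (fun j hj => hinner_j j (Finset.ne_of_mem_erase hj))]
    rw [Finset.sum_const, Finset.card_erase_of_mem (Finset.mem_univ i), Finset.card_univ,
      Fintype.card_fin, smul_eq_mul, hinner_i]
    ring
  have hwtTz : ∀ z : V, LT ≤ wt T z := fun z => hwtT ▸ hw₀ z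
  have hwtlt : ∀ (i : Fin k) (z : V), wt T' w < wt T' (φ i z) := by
    intro i z
    rw [hwt'φ i z, hwt'w]
    have h1 := hwtTz z
    have hk1 : 1 ≤ k := by omega
    zify [hk1]
    have c1 : (0:ℤ) ≤ (Fintype.card V : ℤ) := by positivity
    have c2 : (0:ℤ) ≤ (ℓ z : ℤ) := by positivity
    have c3 : (2:ℤ) ≤ (Fintype.card V : ℤ) := by exact_mod_cast hn2
    have c4 : (3:ℤ) ≤ (k:ℤ) := by exact_mod_cast hk
    have c5 : (LT:ℤ) ≤ (wt T z : ℤ) := by exact_mod_cast h1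
    nlinarith [mul_nonneg (show (0:ℤ) ≤ (k:ℤ) - 2 by linarith) c1,
      mul_nonneg (mul_nonneg (show (0:ℤ) ≤ (k:ℤ) - 1 by linarith) c1) c2]
  have hwc' : IsWeightCenter T' w := by
    intro v'
    rcases hcover v' with hv | ⟨i, z, hz⟩
    · subst hv; exact le_refl _
    · rw [← hz]; exact le_of_lt (hwtlt i z)
  have hwcuniq' : ∀ v' : V', IsWeightCenter T' v' → v' = w := by
    intro v' hv'
    rcases hcover v' with hv | ⟨i, z, hz⟩
    · exact hv
    · exfalso
      have hle2 := hv' w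
      rw [← hz] at hle2
      exact absurd hle2 (not_le.mpr (hwtlt i z))
  have hlev' : ∀ v' : V', level T' v' = T'.dist v' w := by
    intro v'
    have hmem : (level T' v') ∈ {m | ∃ x, IsWeightCenter T' x ∧ T'.dist v' x = m} :=
      Nat.sInf_mem ⟨_, ⟨w, hwc', rfl⟩⟩
    obtain ⟨x, hx, hdx⟩ := hmem
    rw [hwcuniq' x hx] at hdx
    exact hdx.symm
  have hlevT : ∀ v : V, level T v = T.dist v w₀ := by
    intro v
    have hmem : (level T v) ∈ {m | ∃ x, IsWeightCenter T x ∧ T.dist v x = m} :=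
      Nat.sInf_mem ⟨_, ⟨w₀, hw₀, rfl⟩⟩
    obtain ⟨x, hx, hdx⟩ := hmem
    rw [hw₀uniq x hx] at hdx
    exact hdx.symm
  have htlT : totalLevel T = LT := by
    unfold totalLevel
    exact Finset.sum_congr rfl (fun v _ => hlevT v)
  have htl' : totalLevel T' = k * (LT + Fintype.card V) := by
    unfold totalLevel
    exact (Finset.sum_congr rfl (fun v' _ => hlev' v')).trans hsumdistw
  -- lower bound for T'
  have hdiam'1 : 1 ≤ T'.diam := by omega
  have hkn1 : 3 * 1 ≤ k * Fintype.card V := Nat.mul_le_mul hk hn1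
  have hcard'2 : 2 ≤ Fintype.card V' := by omega
  have hSne' : {m | ∃ f, IsRadioLabeling T' f ∧ span f = m}.Nonempty := by
    obtain ⟨f, hf⟩ := exists_isRadioLabeling T'
    exact ⟨span f, f, hf, rfl⟩
  have hx' : ∃ f, IsRadioLabeling T' f ∧ span f = radioNumber T' := by
    unfold radioNumber; exact Nat.sInf_mem hSne'
  obtain ⟨f₁, hf₁, hspan₁⟩ := hx'
  have hrn'ge : ((Fintype.card V' : ℤ) - 1) * ((T'.diam : ℤ) + 1) - 2 * (totalLevel T' : ℤ) + 1
      ≤ (radioNumber T' : ℤ) := by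
    rw [← hspan₁]
    exact span_lower_bound T' hT'c w hlev' hcard'2 hdiam'1 f₁ hf₁
  -- extract an optimal labeling of T and its tight ordering
  have hdiamT1 : 1 ≤ T.diam := by omega
  have hSneT : {m | ∃ f, IsRadioLabeling T f ∧ span f = m}.Nonempty := by
    obtain ⟨f, hf⟩ := exists_isRadioLabeling T
    exact ⟨span f, f, hf, rfl⟩
  have hxT : ∃ f, IsRadioLabeling T f ∧ span f = radioNumber T := by
    unfold radioNumber; exact Nat.sInf_mem hSneT
  obtain ⟨f₀, hf₀, hspan₀⟩ := hxT
  obtain ⟨σ, hσ⟩ := exists_strictMono_equiv rfl f₀ (radio_injective hTc hdiamT1 hf₀)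
  have hnpos : 0 < Fintype.card V := by omega
  set z0 : ℕ → V := fun t => σ ⟨t % Fintype.card V, Nat.mod_lt _ hnpos⟩ with hz0def
  have hz0eq : ∀ t, ∀ (ht : t < Fintype.card V), z0 t = σ ⟨t, ht⟩ := by
    intro t ht
    simp only [hz0def]
    congr 1
    exact Fin.ext (Nat.mod_eq_of_lt ht)
  set F0 : ℕ → ℤ := fun t => (f₀ (z0 t) : ℤ) with hF0def
  have hF0_eq : ∀ t, F0 t = (f₀ (z0 t) : ℤ) := fun _ => rfl
  have hF0mono : ∀ s t, s < t → t < Fintype.card V → F0 s < F0 t := by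
    intro s t hst ht
    have hlt := hσ (a := ⟨s, by omega⟩) (b := ⟨t, ht⟩) (by simp only [Fin.mk_lt_mk]; omega)
    rw [hF0_eq, hF0_eq, hz0eq s (by omega), hz0eq t ht]
    exact_mod_cast hlt
  have hz0inj : ∀ s t, s < Fintype.card V → t < Fintype.card V → z0 s = z0 t → s = t := by
    intro s t hs ht hzz
    rw [hz0eq s hs, hz0eq t ht] at hzz
    have := σ.injective hzz
    simpa using congrArg Fin.val this
  have hz0surj : ∀ v : V, ∃ t, t < Fintype.card V ∧ z0 t = v := by
    intro v
    obtain ⟨i, hi⟩ := σ.surjective v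
    refine ⟨(i : ℕ), i.2, ?_⟩
    rw [hz0eq i i.2]
    simpa using hi
  have hrad0 : ∀ s t, s < Fintype.card V → t < Fintype.card V → s ≠ t →
      (T.diam : ℤ) + 1 ≤ (T.dist (z0 s) (z0 t) : ℤ) + |F0 t - F0 s| := by
    intro s t hs ht hst
    have hne : z0 s ≠ z0 t := fun h => hst (hz0inj s t hs ht h)
    have := hf₀ (z0 s) (z0 t) hne
    rw [hF0_eq, hF0_eq, abs_sub_comm]
    exact this
  have hℓz_nonneg : ∀ t, (0:ℤ) ≤ (ℓ (z0 t) : ℤ) := fun t => by positivity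
  -- gap lower bounds
  have hgap0 : ∀ t, t + 1 < Fintype.card V →
      (T.diam : ℤ) + 1 - (ℓ (z0 t) : ℤ) - (ℓ (z0 (t+1)) : ℤ) ≤ F0 (t+1) - F0 t := by
    intro t ht
    have hr := hrad0 t (t+1) (by omega) ht (by omega)
    have habs : |F0 (t+1) - F0 t| = F0 (t+1) - F0 t := by
      rw [abs_of_pos]
      have := hF0mono t (t+1) (by omega) ht
      omega
    rw [habs] at hr
    have htri : T.dist (z0 t) (z0 (t+1)) ≤ T.dist (z0 t) w₀ + T.dist (z0 (t+1)) w₀ := by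
      calc T.dist (z0 t) (z0 (t+1)) ≤ T.dist (z0 t) w₀ + T.dist w₀ (z0 (t+1)) :=
            hTc.dist_triangle
        _ = T.dist (z0 t) w₀ + T.dist (z0 (t+1)) w₀ := by
            rw [show T.dist w₀ (z0 (t+1)) = T.dist (z0 (t+1)) w₀ from SimpleGraph.dist_comm]
    have htri' : (T.dist (z0 t) (z0 (t+1)) : ℤ) ≤ (ℓ (z0 t) : ℤ) + (ℓ (z0 (t+1)) : ℤ) := by
      rw [hℓ_eq, hℓ_eq]
      exact_mod_cast htri
    linarith
  -- telescoping and tightness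
  have htel0 : ∑ t ∈ Finset.range (Fintype.card V - 1), (F0 (t+1) - F0 t)
      = F0 (Fintype.card V - 1) - F0 0 := Finset.sum_range_sub F0 _
  have hsumb : ∑ t ∈ Finset.range (Fintype.card V - 1),
        ((T.diam : ℤ) + 1 - (ℓ (z0 t) : ℤ) - (ℓ (z0 (t+1)) : ℤ))
      = ((Fintype.card V : ℤ) - 1) * ((T.diam : ℤ) + 1) - 2 * (LT : ℤ)
        + (ℓ (z0 0) : ℤ) + (ℓ (z0 (Fintype.card V - 1)) : ℤ) := by
    have hsumℓ : ∑ t ∈ Finset.range (Fintype.card V), (ℓ (z0 t) : ℤ) = (LT : ℤ) := by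
      rw [Finset.sum_range (fun t => (ℓ (z0 t) : ℤ))]
      have heq : ∀ i : Fin (Fintype.card V), ((ℓ (z0 i) : ℤ)) = ((ℓ (σ i) : ℕ) : ℤ) := by
        intro i; rw [hz0eq i i.2]
      rw [Finset.sum_congr rfl (fun i _ => heq i), ← Nat.cast_sum,
        Equiv.sum_comp σ (fun v => ℓ v)]
    have hs1 : ∑ t ∈ Finset.range (Fintype.card V), (ℓ (z0 t) : ℤ)
        = ∑ t ∈ Finset.range (Fintype.card V - 1), (ℓ (z0 t) : ℤ)
          + (ℓ (z0 (Fintype.card V - 1)) : ℤ) := by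
      conv_lhs => rw [show Fintype.card V = (Fintype.card V - 1) + 1 by omega]
      exact Finset.sum_range_succ _ _
    have hs2 : ∑ t ∈ Finset.range (Fintype.card V), (ℓ (z0 t) : ℤ)
        = ∑ t ∈ Finset.range (Fintype.card V - 1), (ℓ (z0 (t+1)) : ℤ)
          + (ℓ (z0 0) : ℤ) := by
      conv_lhs => rw [show Fintype.card V = (Fintype.card V - 1) + 1 by omega]
      exact Finset.sum_range_succ' _ _
    rw [Finset.sum_sub_distrib, Finset.sum_sub_distrib, Finset.sum_const, Finset.card_range,
      nsmul_eq_mul, Nat.cast_sub (by omega : 1 ≤ Fintype.card V), Nat.cast_one]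
    omega
  have hspanmax : (span f₀ : ℤ) = F0 (Fintype.card V - 1) := by
    have hle : ∀ v : V, f₀ v ≤ f₀ (z0 (Fintype.card V - 1)) := by
      intro v
      obtain ⟨t, ht, hzt⟩ := hz0surj v
      rcases Nat.lt_or_ge t (Fintype.card V - 1) with h | h
      · have := hF0mono t (Fintype.card V - 1) h (by omega)
        rw [hF0_eq, hF0_eq] at this
        rw [← hzt]
        exact_mod_cast le_of_lt this
      · have : t = Fintype.card V - 1 := by omega
        rw [← hzt, this]
    have h1 : span f₀ = f₀ (z0 (Fintype.card V - 1)) := by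
      apply le_antisymm
      · exact Finset.sup_le (fun v _ => hle v)
      · exact Finset.le_sup (Finset.mem_univ _)
    rw [h1, hF0_eq]
  have hrnval : (span f₀ : ℤ)
      = ((Fintype.card V : ℤ) - 1) * ((T.diam : ℤ) + 1) - 2 * (LT : ℤ) + 1 := by
    rw [hspan₀, hlb, htlT]
  have hends0 : (1 : ℤ) ≤ (ℓ (z0 0) : ℤ) + (ℓ (z0 (Fintype.card V - 1)) : ℤ) := by
    by_contra hcon
    push_neg at hcon
    have l0 := hℓz_nonneg 0
    have l1 := hℓz_nonneg (Fintype.card V - 1)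
    have e0 : (ℓ (z0 0) : ℤ) = 0 := by omega
    have e1 : (ℓ (z0 (Fintype.card V - 1)) : ℤ) = 0 := by omega
    have hc0 : z0 0 = w₀ := by
      apply hTc.dist_eq_zero_iff.mp
      rw [← hℓ_eq]
      exact_mod_cast e0
    have hc1 : z0 (Fintype.card V - 1) = w₀ := by
      apply hTc.dist_eq_zero_iff.mp
      rw [← hℓ_eq]
      exact_mod_cast e1
    have := hz0inj 0 (Fintype.card V - 1) (by omega) (by omega) (hc0.trans hc1.symm)
    omega
  have hsum_ge : ∑ t ∈ Finset.range (Fintype.card V - 1),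
      ((T.diam : ℤ) + 1 - (ℓ (z0 t) : ℤ) - (ℓ (z0 (t+1)) : ℤ))
      ≤ F0 (Fintype.card V - 1) - F0 0 := by
    rw [← htel0]
    apply Finset.sum_le_sum
    intro t htmem
    exact hgap0 t (by have := Finset.mem_range.mp htmem; omega)
  have hF00 : (0:ℤ) ≤ F0 0 := by rw [hF0_eq]; positivity
  have hdiff_nonneg : ∀ s ∈ Finset.range (Fintype.card V - 1),
      (0:ℤ) ≤ (F0 (s+1) - F0 s) - ((T.diam : ℤ) + 1 - (ℓ (z0 s) : ℤ) - (ℓ (z0 (s+1)) : ℤ)) := by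
    intro s hs
    have := hgap0 s (by have := Finset.mem_range.mp hs; omega)
    omega
  have hdiffsum : ∑ t ∈ Finset.range (Fintype.card V - 1),
      ((F0 (t+1) - F0 t) - ((T.diam : ℤ) + 1 - (ℓ (z0 t) : ℤ) - (ℓ (z0 (t+1)) : ℤ))) = 0 ∧
      F0 0 = 0 ∧ (ℓ (z0 0) : ℤ) + (ℓ (z0 (Fintype.card V - 1)) : ℤ) = 1 := by
    have hge := Finset.sum_nonneg hdiff_nonneg
    have hle : ∑ t ∈ Finset.range (Fintype.card V - 1),
        ((F0 (t+1) - F0 t) - ((T.diam : ℤ) + 1 - (ℓ (z0 t) : ℤ) - (ℓ (z0 (t+1)) : ℤ)))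
        = (F0 (Fintype.card V - 1) - F0 0)
          - (((Fintype.card V : ℤ) - 1) * ((T.diam : ℤ) + 1) - 2 * (LT : ℤ)
            + (ℓ (z0 0) : ℤ) + (ℓ (z0 (Fintype.card V - 1)) : ℤ)) := by
      rw [Finset.sum_sub_distrib, htel0, hsumb]
    have h1 : F0 (Fintype.card V - 1) = (span f₀ : ℤ) := hspanmax.symm
    refine ⟨by omega, by omega, by omega⟩
  have htight : ∀ t, t + 1 < Fintype.card V →
      F0 (t+1) = F0 t + ((T.diam : ℤ) + 1 - (ℓ (z0 t) : ℤ) - (ℓ (z0 (t+1)) : ℤ)) := by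
    intro t ht
    have := (Finset.sum_eq_zero_iff_of_nonneg hdiff_nonneg).mp hdiffsum.1 t
      (Finset.mem_range.mpr (by omega))
    omega
  have hF00eq : F0 0 = 0 ∧ (ℓ (z0 0) : ℤ) + (ℓ (z0 (Fintype.card V - 1)) : ℤ) = 1 :=
    hdiffsum.2
  -- package the tight ordering, ending at the weight center
  have hpack : ∃ (zz : ℕ → V) (FF : ℕ → ℤ),
      (∀ v : V, ∃ t, t < Fintype.card V ∧ zz t = v) ∧
      (∀ s t, s < Fintype.card V → t < Fintype.card V → zz s = zz t → s = t) ∧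
      (∀ s t, s < t → t < Fintype.card V → FF s < FF t) ∧
      (∀ t, t + 1 < Fintype.card V →
        FF (t+1) = FF t + ((T.diam : ℤ) + 1 - (ℓ (zz t) : ℤ) - (ℓ (zz (t+1)) : ℤ))) ∧
      (∀ s t, s < Fintype.card V → t < Fintype.card V → s ≠ t →
        (T.diam : ℤ) + 1 ≤ (T.dist (zz s) (zz t) : ℤ) + |FF t - FF s|) ∧
      zz (Fintype.card V - 1) = w₀ := by
    by_cases hcase : (ℓ (z0 (Fintype.card V - 1)) : ℤ) = 0
    · refine ⟨z0, F0, hz0surj, hz0inj, hF0mono, htight, hrad0, ?_⟩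
      apply hTc.dist_eq_zero_iff.mp
      rw [← hℓ_eq]
      exact_mod_cast hcase
    · -- reverse the ordering
      have hl00 : (ℓ (z0 0) : ℤ) = 0 := by
        have := hF00eq.2
        have := hℓz_nonneg 0
        have := hℓz_nonneg (Fintype.card V - 1)
        omega
      refine ⟨fun t => z0 (Fintype.card V - 1 - t), fun t => - F0 (Fintype.card V - 1 - t),
        ?_, ?_, ?_, ?_, ?_, ?_⟩
      · intro v
        obtain ⟨t, ht, hzt⟩ := hz0surj v
        refine ⟨Fintype.card V - 1 - t, by omega, ?_⟩
        show z0 (Fintype.card V - 1 - (Fintype.card V - 1 - t)) = v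
        rw [show Fintype.card V - 1 - (Fintype.card V - 1 - t) = t by omega]
        exact hzt
      · intro s t hs ht hzz
        have := hz0inj (Fintype.card V - 1 - s) (Fintype.card V - 1 - t) (by omega) (by omega)
          hzz
        omega
      · intro s t hst ht
        show -F0 (Fintype.card V - 1 - s) < -F0 (Fintype.card V - 1 - t)
        have := hF0mono (Fintype.card V - 1 - t) (Fintype.card V - 1 - s) (by omega) (by omega)
        omega
      · intro t ht
        show -F0 (Fintype.card V - 1 - (t+1)) = -F0 (Fintype.card V - 1 - t)
          + ((T.diam : ℤ) + 1 - (ℓ (z0 (Fintype.card V - 1 - t)) : ℤ)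
            - (ℓ (z0 (Fintype.card V - 1 - (t+1))) : ℤ))
        have hs := htight (Fintype.card V - 1 - (t+1)) (by omega)
        rw [show Fintype.card V - 1 - (t+1) + 1 = Fintype.card V - 1 - t by omega] at hs
        rw [hs]
        ring
      · intro s t hs ht hst
        show (T.diam : ℤ) + 1 ≤ (T.dist (z0 (Fintype.card V - 1 - s))
            (z0 (Fintype.card V - 1 - t)) : ℤ)
          + |(-F0 (Fintype.card V - 1 - t)) - (-F0 (Fintype.card V - 1 - s))|
        have hr := hrad0 (Fintype.card V - 1 - s) (Fintype.card V - 1 - t) (by omega) (by omega)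
          (by omega)
        have habs : |(-F0 (Fintype.card V - 1 - t)) - (-F0 (Fintype.card V - 1 - s))|
            = |F0 (Fintype.card V - 1 - t) - F0 (Fintype.card V - 1 - s)| := by
          rw [show (-F0 (Fintype.card V - 1 - t)) - (-F0 (Fintype.card V - 1 - s))
            = -(F0 (Fintype.card V - 1 - t) - F0 (Fintype.card V - 1 - s)) by ring, abs_neg]
        rw [habs]
        exact hr
      · show z0 (Fintype.card V - 1 - (Fintype.card V - 1)) = w₀
        rw [Nat.sub_self]
        apply hTc.dist_eq_zero_iff.mp
        rw [← hℓ_eq]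
        exact_mod_cast hl00
  obtain ⟨zz, FF, hzzsurj, hzzinj, hFFmono, hFFrec, hFFrad, hzzlast⟩ := hpack
  -- the glued ordering on V'
  have hkpos : 0 < k := by omega
  set cix : ℕ → Fin k := fun t => ⟨(t-1) % k, Nat.mod_lt _ hkpos⟩ with hcixdef
  set pix : ℕ → ℕ := fun t => (t-1) / k with hpixdef
  have hcix_eq : ∀ t, ((cix t : Fin k) : ℕ) = (t-1) % k := fun _ => rfl
  have hpix_eq : ∀ t, pix t = (t-1) / k := fun _ => rfl
  set x' : ℕ → V' := fun t => if t = 0 then w else φ (cix t) (zz (pix t)) with hx'def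
  have hx'0 : x' 0 = w := rfl
  have hx'ne : ∀ t, t ≠ 0 → x' t = φ (cix t) (zz (pix t)) := fun t ht => if_neg ht
  have hx'pos : ∀ (p c : ℕ) (hc : c < k), x' (1 + k*p + c) = φ ⟨c, hc⟩ (zz p) := by
    intro p c hc
    have ht0 : 1 + k*p + c ≠ 0 := by omega
    rw [hx'ne _ ht0]
    have h1 : (1 + k*p + c) - 1 = c + p * k := by
      have : k * p = p * k := by ring
      omega
    have hmod : ((1 + k*p + c) - 1) % k = c := by
      rw [h1, Nat.add_mul_mod_self_right, Nat.mod_eq_of_lt hc]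
    have hdiv : ((1 + k*p + c) - 1) / k = p := by
      rw [h1, Nat.add_mul_div_right _ _ hkpos, Nat.div_eq_of_lt hc]
      omega
    congr 1
    · exact Fin.ext (by rw [hcix_eq, hmod])
    · rw [hpix_eq, hdiv]
  have hsurj' : ∀ v' : V', ∃ t, t < k * Fintype.card V + 1 ∧ x' t = v' := by
    intro v'
    rcases hcover v' with hv | ⟨i, y, hy⟩
    · exact ⟨0, by omega, by rw [hx'0, hv]⟩
    · obtain ⟨p, hp, hzp⟩ := hzzsurj y
      refine ⟨1 + k*p + (i : ℕ), ?_, ?_⟩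
      · have h2 : k*(p+1) = k*p + k := by ring
        have h3 : k*(p+1) ≤ k*Fintype.card V := Nat.mul_le_mul_left k (by omega)
        have := i.2
        omega
      · rw [hx'pos p (i : ℕ) i.2, hzp]
        rw [show (⟨(i:ℕ), i.2⟩ : Fin k) = i from Fin.ext rfl]
        exact hy
  have hposdecomp : ∀ s, 1 ≤ s → s = 1 + k * pix s + ((cix s : Fin k) : ℕ) := by
    intro s hs
    rw [hcix_eq, hpix_eq]
    have := Nat.div_add_mod (s-1) k
    omega
  have hpixlt : ∀ s, s < k * Fintype.card V + 1 → 1 ≤ s → pix s < Fintype.card V := by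
    intro s hsN hs1
    rw [hpix_eq]
    exact Nat.div_lt_of_lt_mul (by omega)
  have hinj' : ∀ s t, s < k * Fintype.card V + 1 → t < k * Fintype.card V + 1 →
      x' s = x' t → s = t := by
    intro s t hs ht hxx
    rcases Nat.eq_zero_or_pos s with hs0 | hs1 <;> rcases Nat.eq_zero_or_pos t with ht0 | ht1
    · omega
    · exfalso; subst hs0; rw [hx'0, hx'ne t (by omega)] at hxx
      exact hwni _ _ hxx.symm
    · exfalso; subst ht0; rw [hx'0, hx'ne s (by omega)] at hxx
      exact hwni _ _ hxx
    · rw [hx'ne s (by omega), hx'ne t (by omega)] at hxx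
      by_cases hcc : cix s = cix t
      · rw [hcc] at hxx
        have hzeq := hinj _ hxx
        have hpp := hzzinj (pix s) (pix t) (hpixlt s hs (by omega)) (hpixlt t ht (by omega)) hzeq
        have h1 := hposdecomp s (by omega)
        have h2 := hposdecomp t (by omega)
        rw [hpp] at h1
        have h3 : ((cix s : Fin k) : ℕ) = ((cix t : Fin k) : ℕ) := by rw [hcc]
        omega
      · exact absurd hxx (hdisj _ _ hcc _ _)
  -- levels along the ordering and label gaps
  set lev2 : ℕ → ℤ := fun t => (T'.dist (x' t) w : ℤ) with hlev2def
  have hlev2_eq : ∀ t, lev2 t = (T'.dist (x' t) w : ℤ) := fun _ => rfl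
  have hlev20 : lev2 0 = 0 := by
    rw [hlev2_eq, hx'0, SimpleGraph.dist_self]; rfl
  have hlev2le : ∀ t, lev2 t ≤ (e:ℤ) + 1 := by
    intro t
    rw [hlev2_eq]
    exact_mod_cast Nat.cast_le.mpr (hlev'le (x' t))
  have hlev2nn : ∀ t, (0:ℤ) ≤ lev2 t := fun t => by rw [hlev2_eq]; positivity
  have hlev2pos : ∀ (p c : ℕ) (hc : c < k), lev2 (1 + k*p + c) = (ℓ (zz p) : ℤ) + 1 := by
    intro p c hc
    rw [hlev2_eq, hx'pos p c hc, hdw']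
    push_cast
    ring
  set gp : ℕ → ℤ := fun t => (2*(e:ℤ)+3) - lev2 t - lev2 (t+1) with hgpdef
  have hgp_eq : ∀ t, gp t = (2*(e:ℤ)+3) - lev2 t - lev2 (t+1) := fun _ => rfl
  have hgp1 : ∀ t, (1:ℤ) ≤ gp t := by
    intro t
    have := hlev2le t
    have := hlev2le (t+1)
    rw [hgp_eq]
    linarith
  set g : ℕ → ℤ := fun t => ∑ s ∈ Finset.range t, gp s with hgdef
  have hgstep : ∀ t, g (t+1) = g t + gp t := fun t => Finset.sum_range_succ gp t
  have hg0 : g 0 = 0 := Finset.sum_range_zero gp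
  have hgd : ∀ s t : ℕ, s ≤ t → (t:ℤ) - (s:ℤ) ≤ g t - g s := by
    intro s t hst
    induction t, hst using Nat.le_induction with
    | base => simp
    | succ t hst ih =>
      have := hgp1 t
      have := hgstep t
      push_cast
      push_cast at ih
      omega
  have hgnn : ∀ t, (0:ℤ) ≤ g t := by
    intro t
    have := hgd 0 t (by omega)
    rw [hg0] at this
    simp at this
    omega
  -- the generic gap bound
  have hGB : ∀ s t : ℕ, s < t →
      ((t:ℤ) - (s:ℤ) - 1) + (2*(e:ℤ)+3) - lev2 s - lev2 t ≤ g t - g s := by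
    intro s t hst
    induction t, hst using Nat.le_induction with
    | base =>
      have h1 : g (s+1) - g s = gp s := by rw [hgstep]; ring
      rw [h1, hgp_eq]
      push_cast
      linarith
    | succ t hst ih =>
      have h1 := hgstep t
      have h2 := hgp_eq t
      have h3 := hlev2le t
      have h4 := hlev2nn t
      push_cast
      push_cast at ih
      omega
  -- the same-copy cycle bound
  have hCBstep : ∀ (c : ℕ) (hc : c < k) (p : ℕ), p + 1 < Fintype.card V →
      ((k:ℤ)-3) + (2*(e:ℤ)+2 - (T.diam : ℤ)) + (FF (p+1) - FF p)
        ≤ g (1 + k*(p+1) + c) - g (1 + k*p + c) := by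
    intro c hc p hp1
    have hpos : 1 + k*(p+1) + c = (1 + k*p + c) + k := by ring
    rw [hpos]
    have hgb := hGB (1 + k*p + c) ((1 + k*p + c) + k) (by omega)
    have hl1 : lev2 (1 + k*p + c) = (ℓ (zz p) : ℤ) + 1 := hlev2pos p c hc
    have hl2 : lev2 ((1 + k*p + c) + k) = (ℓ (zz (p+1)) : ℤ) + 1 := by
      rw [show (1 + k*p + c) + k = 1 + k*(p+1) + c by ring]
      exact hlev2pos (p+1) c hc
    have hrec := hFFrec p hp1
    rw [hl1, hl2] at hgb
    have hcast : ((((1 + k*p + c) + k : ℕ)):ℤ) - ((1 + k*p + c : ℕ):ℤ) - 1 = (k:ℤ) - 1 := by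
      push_cast; ring
    rw [hcast] at hgb
    have hd2e : (T.diam : ℤ) ≤ 2*(e:ℤ) := by exact_mod_cast hd₀2e
    linarith
  have hCB : ∀ (c : ℕ) (hc : c < k) (p q : ℕ), p < q → q < Fintype.card V →
      ((q:ℤ)-(p:ℤ)) * (((k:ℤ)-3) + (2*(e:ℤ)+2 - (T.diam : ℤ))) + (FF q - FF p)
        ≤ g (1 + k*q + c) - g (1 + k*p + c) := by
    intro c hc p q hpq
    induction q, hpq using Nat.le_induction with
    | base =>
      intro hq
      have := hCBstep c hc p hq
      push_cast
      linarith
    | succ q hpq ih =>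
      intro hq
      have hih := ih (by omega)
      have hstep := hCBstep c hc q hq
      have : ((q:ℤ)+1-(p:ℤ)) = ((q:ℤ)-(p:ℤ)) + 1 := by ring
      push_cast
      push_cast at hih hstep
      linarith
  -- the main pairwise estimate
  have hmain : ∀ s t, s < t → t < k * Fintype.card V + 1 →
      (2*(e:ℤ)+2) + 1 ≤ (T'.dist (x' s) (x' t) : ℤ) + (g t - g s) := by
    intro s t hst htN
    rcases Nat.eq_zero_or_pos s with hs0 | hs1
    · subst hs0
      have hgb := hGB 0 t hst
      rw [hlev20, hg0] at hgb
      have hd : (T'.dist (x' 0) (x' t) : ℤ) = lev2 t := by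
        rw [hx'0, hlev2_eq, SimpleGraph.dist_comm]
      rw [hd, hg0]
      push_cast at hgb
      have ht1 : (1:ℤ) ≤ (t:ℤ) := by exact_mod_cast hst
      linarith
    · have hs' := hposdecomp s (by omega)
      have ht' := hposdecomp t (by omega)
      have hps := hpixlt s (by omega) (by omega)
      have hpt := hpixlt t htN (by omega)
      have hxs : x' s = φ (cix s) (zz (pix s)) := hx'ne s (by omega)
      have hxt : x' t = φ (cix t) (zz (pix t)) := hx'ne t (by omega)
      by_cases hcc : cix s = cix t
      · -- same copy
        have hpslt : pix s < pix t := by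
          have h3 : ((cix s : Fin k) : ℕ) = ((cix t : Fin k) : ℕ) := by rw [hcc]
          have h4 : k * pix s < k * pix t := by omega
          exact Nat.lt_of_mul_lt_mul_left h4
        have hdist : T'.dist (x' s) (x' t) = T.dist (zz (pix s)) (zz (pix t)) := by
          rw [hxs, hxt, hcc, hdsame]
        have hrad := hFFrad (pix s) (pix t) hps hpt (by omega)
        have habs : |FF (pix t) - FF (pix s)| = FF (pix t) - FF (pix s) := by
          have := hFFmono (pix s) (pix t) hpslt hpt
          rw [abs_of_pos]
          omega
        rw [habs] at hrad
        have hcb := hCB ((cix s : Fin k) : ℕ) (by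
            rw [hcix_eq]; exact Nat.mod_lt _ hkpos) (pix s) (pix t) hpslt hpt
        rw [← hs'] at hcb
        have h3 : ((cix s : Fin k) : ℕ) = ((cix t : Fin k) : ℕ) := by rw [hcc]
        rw [h3, ← ht'] at hcb
        have hd2e : (T.diam : ℤ) ≤ 2*(e:ℤ) := by exact_mod_cast hd₀2e
        have hX : (0:ℤ) ≤ ((k:ℤ)-3) + (2*(e:ℤ)+2 - (T.diam : ℤ)) := by
          have : (3:ℤ) ≤ (k:ℤ) := by exact_mod_cast hk
          linarith
        have hqp1 : (1:ℤ) ≤ (pix t : ℤ) - (pix s : ℤ) := by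
          have : pix s < pix t := hpslt
          omega
        have hmul : ((k:ℤ)-3) + (2*(e:ℤ)+2 - (T.diam : ℤ))
            ≤ ((pix t : ℤ)-(pix s : ℤ)) * (((k:ℤ)-3) + (2*(e:ℤ)+2 - (T.diam : ℤ))) := by
          calc ((k:ℤ)-3) + (2*(e:ℤ)+2 - (T.diam : ℤ))
              = 1 * (((k:ℤ)-3) + (2*(e:ℤ)+2 - (T.diam : ℤ))) := (one_mul _).symm
            _ ≤ ((pix t : ℤ)-(pix s : ℤ)) * (((k:ℤ)-3) + (2*(e:ℤ)+2 - (T.diam : ℤ))) :=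
                mul_le_mul_of_nonneg_right hqp1 hX
        have hk3 : (3:ℤ) ≤ (k:ℤ) := by exact_mod_cast hk
        rw [hdist]
        linarith
      · -- different copies
        have hdist : T'.dist (x' s) (x' t) = ℓ (zz (pix s)) + ℓ (zz (pix t)) + 2 := by
          rw [hxs, hxt]
          exact hdcross (cix s) (cix t) hcc _ _
        have hgb := hGB s t hst
        have hl1 : lev2 s = (ℓ (zz (pix s)) : ℤ) + 1 := by
          conv_lhs => rw [hs']
          exact hlev2pos (pix s) _ (by rw [hcix_eq]; exact Nat.mod_lt _ hkpos)
        have hl2 : lev2 t = (ℓ (zz (pix t)) : ℤ) + 1 := by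
          conv_lhs => rw [ht']
          exact hlev2pos (pix t) _ (by rw [hcix_eq]; exact Nat.mod_lt _ hkpos)
        rw [hl1, hl2] at hgb
        have hts : (1:ℤ) ≤ (t:ℤ) - (s:ℤ) := by
          have : s < t := hst
          omega
        rw [hdist]
        push_cast
        push_cast at hgb
        linarith
  -- the labeling
  have hsurj0 : ∀ v' : V', ∃ t, x' t = v' := by
    intro v'; obtain ⟨t, _, h⟩ := hsurj' v'; exact ⟨t, h⟩
  set pos' : V' → ℕ := fun v => Nat.find (hsurj0 v) with hpos'def
  have hpos'spec : ∀ v', x' (pos' v') = v' := fun v' => Nat.find_spec (hsurj0 v')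
  have hpos'lt : ∀ v', pos' v' < k * Fintype.card V + 1 := by
    intro v'
    obtain ⟨t, ht, hxt⟩ := hsurj' v'
    have : pos' v' ≤ t := Nat.find_min' (hsurj0 v') hxt
    omega
  set fl : V' → ℕ := fun v => (g (pos' v)).toNat with hfldef
  have hfl_eq : ∀ v, (fl v : ℤ) = g (pos' v) := fun v => Int.toNat_of_nonneg (hgnn _)
  have hflrad : IsRadioLabeling T' fl := by
    intro u v huv
    have hne : pos' u ≠ pos' v := by
      intro h
      apply huv
      rw [← hpos'spec u, ← hpos'spec v, h]
    rw [hdiam']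
    rcases Nat.lt_or_ge (pos' u) (pos' v) with h | h
    · have hm := hmain (pos' u) (pos' v) h (hpos'lt v)
      rw [hpos'spec, hpos'spec] at hm
      have hgt : g (pos' u) < g (pos' v) := by
        have h1 := hgd (pos' u) (pos' v) (le_of_lt h)
        have h2 : ((pos' u : ℕ) : ℤ) < ((pos' v : ℕ) : ℤ) := by exact_mod_cast h
        omega
      have habs : |(fl u : ℤ) - (fl v : ℤ)| = g (pos' v) - g (pos' u) := by
        rw [hfl_eq, hfl_eq, abs_sub_comm, abs_of_pos (by omega)]
      rw [habs]
      push_cast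
      linarith
    · have hlt : pos' v < pos' u := by omega
      have hm := hmain (pos' v) (pos' u) hlt (hpos'lt u)
      rw [hpos'spec, hpos'spec] at hm
      have hgt : g (pos' v) < g (pos' u) := by
        have h1 := hgd (pos' v) (pos' u) (le_of_lt hlt)
        have h2 : ((pos' v : ℕ) : ℤ) < ((pos' u : ℕ) : ℤ) := by exact_mod_cast hlt
        omega
      have habs : |(fl u : ℤ) - (fl v : ℤ)| = g (pos' u) - g (pos' v) := by
        rw [hfl_eq, hfl_eq, abs_of_pos (by omega)]
      rw [habs]
      have hdc : T'.dist u v = T'.dist v u := SimpleGraph.dist_comm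
      rw [hdc]
      push_cast
      linarith
  -- span of the labeling
  have hx'last : x' (k * Fintype.card V) = φ ⟨k-1, by omega⟩ (zz (Fintype.card V - 1)) := by
    have hdecomp2 : k * Fintype.card V = 1 + k*(Fintype.card V - 1) + (k-1) := by
      have h2 : k*(Fintype.card V - 1 + 1) = k*(Fintype.card V - 1) + k := by ring
      have h3 : Fintype.card V - 1 + 1 = Fintype.card V := by omega
      rw [h3] at h2
      omega
    rw [hdecomp2, hx'pos (Fintype.card V - 1) (k-1) (by omega)]
  have hlev2last : lev2 (k * Fintype.card V) = 1 := by
    rw [hlev2_eq, hx'last, hzzlast, hdw', hℓw₀]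
    norm_num
  have hposlast : pos' (x' (k * Fintype.card V)) = k * Fintype.card V := by
    have h1 : pos' (x' (k * Fintype.card V)) ≤ k * Fintype.card V :=
      Nat.find_min' (hsurj0 _) rfl
    exact hinj' _ _ (by omega) (by omega) (hpos'spec (x' (k * Fintype.card V)))
  have hspanfl : (span fl : ℤ) = g (k * Fintype.card V) := by
    have hmax : ∀ v : V', fl v ≤ fl (x' (k * Fintype.card V)) := by
      intro v
      have h1 : pos' v ≤ k * Fintype.card V := by have := hpos'lt v; omega
      have h2 := hgd (pos' v) (k * Fintype.card V) h1
      have h3 : g (pos' v) ≤ g (k * Fintype.card V) := by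
        have h4 : (0:ℤ) ≤ ((k * Fintype.card V : ℕ) : ℤ) - ((pos' v : ℕ) : ℤ) := by
          push_cast
          omega
        omega
      have h5 : fl v = (g (pos' v)).toNat := rfl
      have h6 : fl (x' (k * Fintype.card V)) = (g (k * Fintype.card V)).toNat := by
        show (g (pos' (x' (k * Fintype.card V)))).toNat = _
        rw [hposlast]
      rw [h5, h6]
      exact Int.toNat_le_toNat h3
    have hsp : span fl = fl (x' (k * Fintype.card V)) :=
      le_antisymm (Finset.sup_le fun v _ => hmax v) (Finset.le_sup (Finset.mem_univ _))
    rw [hsp]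
    have h6 : fl (x' (k * Fintype.card V)) = (g (k * Fintype.card V)).toNat := by
      show (g (pos' (x' (k * Fintype.card V)))).toNat = _
      rw [hposlast]
    rw [h6, Int.toNat_of_nonneg (hgnn _)]
  -- value of the span
  have hsumlev : ∑ t ∈ Finset.range (k * Fintype.card V + 1), lev2 t
      = ((k * (LT + Fintype.card V) : ℕ) : ℤ) := by
    have hbij : ∑ t ∈ Finset.range (k * Fintype.card V + 1), lev2 t
        = ∑ v' : V', ((T'.dist v' w : ℕ) : ℤ) := by
      apply Finset.sum_bij (fun t _ => x' t)
      · exact fun t _ => Finset.mem_univ _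
      · intro s hs t ht hxx
        exact hinj' s t (Finset.mem_range.mp hs) (Finset.mem_range.mp ht) hxx
      · intro v' _
        obtain ⟨t, ht, hxt⟩ := hsurj' v'
        exact ⟨t, Finset.mem_range.mpr ht, hxt⟩
      · intro t _
        rfl
    rw [hbij, ← Nat.cast_sum, hsumdistw]
  have hgfinal : g (k * Fintype.card V)
      = ((k * Fintype.card V : ℕ) : ℤ) * (2*(e:ℤ)+3)
        - 2 * ((k * (LT + Fintype.card V) : ℕ) : ℤ) + 1 := by
    have h1 : g (k * Fintype.card V)
        = ∑ s ∈ Finset.range (k * Fintype.card V), gp s := rfl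
    have hsucc1 : ∑ t ∈ Finset.range (k * Fintype.card V + 1), lev2 t
        = ∑ s ∈ Finset.range (k * Fintype.card V), lev2 s + lev2 (k * Fintype.card V) :=
      Finset.sum_range_succ _ _
    have hsucc2 : ∑ t ∈ Finset.range (k * Fintype.card V + 1), lev2 t
        = ∑ s ∈ Finset.range (k * Fintype.card V), lev2 (s+1) + lev2 0 :=
      Finset.sum_range_succ' _ _
    rw [h1, Finset.sum_congr rfl (fun s _ => hgp_eq s), Finset.sum_sub_distrib,
      Finset.sum_sub_distrib, Finset.sum_const, Finset.card_range, nsmul_eq_mul]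
    rw [hlev2last] at hsucc1
    rw [hlev20] at hsucc2
    omega
  -- conclusion
  have hrnle : (radioNumber T' : ℤ) ≤ (span fl : ℤ) := by
    have hmem : span fl ∈ {m | ∃ f, IsRadioLabeling T' f ∧ span f = m} := ⟨fl, hflrad, rfl⟩
    have h1 : radioNumber T' ≤ span fl := Nat.sInf_le hmem
    exact_mod_cast h1
  have hspanval : (span fl : ℤ) = ((Fintype.card V' : ℤ) - 1) * ((T'.diam : ℤ) + 1)
      - 2 * (totalLevel T' : ℤ) + 1 := by
    rw [hspanfl, hgfinal, hcard', hdiam', htl']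
    push_cast
    ring
  have hfirst : (radioNumber T' : ℤ) = ((Fintype.card V' : ℤ) - 1) * ((T'.diam : ℤ) + 1)
      - 2 * (totalLevel T' : ℤ) + 1 :=
    le_antisymm (hspanval ▸ hrnle) hrn'ge
  refine ⟨hfirst, ?_⟩
  rw [hfirst, hcard', hdiam', htl', hlb, htlT]
  push_cast
  ring
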